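/- arXiv:1101.5831 — 2 statements merged into one kernel-verified Lean document; each statement's English description precedes it below -/
import Mathlib

section
/- If φ is an f-structure (φ³ + φ = 0) on a finite-dimensional real vector space V, then the rank of φ is even. -/
/-- The rank of an f-structure (`φ³ + φ = 0`) on a finite-dimensional real
vector space is even. -/
theorem fStructure_rank_even {V : Type*} [AddCommGroup V] [Module ℝ V]
    [FiniteDimensional ℝ V]
    (φ : V →ₗ[ℝ] V) (hφ : φ ∘ₗ φ ∘ₗ φ + φ = 0) :
    Even (Module.finrank ℝ (LinearMap.range φ)) := by
  set W := LinearMap.range φ with hW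
  have hmaps : ∀ x ∈ W, φ x ∈ W := fun x _ => LinearMap.mem_range_self φ x
  set ψ : W →ₗ[ℝ] W := φ.restrict hmaps with hψ
  have hsq : ψ * ψ = -1 := by
    ext ⟨x, hx⟩
    obtain ⟨v, rfl⟩ := hx
    have h3 := congrArg (fun f => f v) hφ
    simp only [LinearMap.add_apply, LinearMap.comp_apply, LinearMap.zero_apply] at h3
    simp only [Module.End.mul_apply, LinearMap.neg_apply, Module.End.one_apply, hψ,
      LinearMap.restrict_coe_apply, Submodule.coe_neg]
    exact eq_neg_of_add_eq_zero_left h3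
  have hsq' : (ψ : Module.End ℝ W) * ψ = -1 := hsq
  letI : Module ℂ W := Module.compHom W (Complex.liftAux ψ hsq').toRingHom
  haveI : IsScalarTower ℝ ℂ W := ⟨fun r z w => by
    have he : Complex.liftAux ψ hsq' (r • z) = r • Complex.liftAux ψ hsq' z :=
      map_smul (Complex.liftAux ψ hsq').toLinearMap r z
    change Complex.liftAux ψ hsq' (r • z) w = r • Complex.liftAux ψ hsq' z w
    rw [he]; rfl⟩
  have h := Module.finrank_mul_finrank ℝ ℂ W
  rw [Complex.finrank_real_complex] at h
  exact ⟨Module.finrank ℂ W, by omega⟩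
end

section
/- On an almost S-manifold, the bracket {f, g} = X_f·g - (ξ̄·f)g on C∞(M) satisfies the Leibniz-type identity ξᵢ·{f,g} = {ξᵢ·f, g} + {f, ξᵢ·g} for each i. -/
/-- Algebraic model of an almost `S`-manifold: `C` is the ring of smooth
functions, `V` the `C`-module of vector fields with bracket and action
`act X f = X·f` on functions, `ξᵢ` the Reeb fields, `ηⁱ` the dual 1-forms and
`Φ` the fundamental 2-form, with `Φ = -dηⁱ`, `[ξᵢ,ξⱼ] = 0`, `L_{ξᵢ}ηʲ = 0`,
`L_{ξᵢ}Φ = 0`.  The Hamiltonian vector field `X_f` is the unique vector field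
with `ηⁱ(X_f) = f` for all `i` and `ι(X_f)Φ = df - (ξ̄·f)η̄`, where
`ξ̄ = Σᵢ ξᵢ` and `η̄ = (1/k)Σᵢ ηⁱ`.  The bracket `{f,g} = X_f·g - (ξ̄·f)g`
on functions satisfies `ξᵢ·{f,g} = {ξᵢ·f, g} + {f, ξᵢ·g}` for each `i`. -/
theorem almostS_bracket_leibniz {C : Type*} [CommRing C] [Algebra ℝ C]
    {V : Type*} [AddCommGroup V] [Module C V] {k : ℕ} (hk : k ≠ 0)
    (act : V → C → C) (bracket : V → V → V)
    (ξ : Fin k → V) (η : Fin k → V → C) (Φ : V → V → C)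
    -- vector fields act as derivations, compatibly with the bracket
    (hact_mul : ∀ X f g, act X (f * g) = act X f * g + f * act X g)
    (hact_add : ∀ X f g, act X (f + g) = act X f + act X g)
    (hact_bracket : ∀ X Y f, act (bracket X Y) f = act X (act Y f) - act Y (act X f))
    -- `Φ = -dηⁱ` for each `i`
    (hΦdη : ∀ i X Y, Φ X Y = -(act X (η i Y) - act Y (η i X) - η i (bracket X Y)))
    -- `[ξᵢ, ξⱼ] = 0`
    (hξξ : ∀ i j, bracket (ξ i) (ξ j) = 0)
    -- `L_{ξᵢ} ηʲ = 0`
    (hLη : ∀ i j Y, act (ξ i) (η j Y) = η j (bracket (ξ i) Y))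
    -- `L_{ξᵢ} Φ = 0`
    (hLΦ : ∀ i X Y, act (ξ i) (Φ X Y) = Φ (bracket (ξ i) X) Y + Φ X (bracket (ξ i) Y))
    -- the Hamiltonian assignment `f ↦ X_f` and its defining properties
    (Xf : C → V)
    (hXη : ∀ f i, η i (Xf f) = f)
    (hXΦ : ∀ f Y, Φ (Xf f) Y
      = act Y f - act (∑ i, ξ i) f * (algebraMap ℝ C (1 / (k : ℝ)) * ∑ i, η i Y))
    -- uniqueness of the Hamiltonian vector field
    (hXuniq : ∀ (f : C) (Z : V), (∀ i, η i Z = f) →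
      (∀ Y, Φ Z Y = act Y f - act (∑ i, ξ i) f * (algebraMap ℝ C (1 / (k : ℝ)) * ∑ i, η i Y)) →
      Z = Xf f)
    -- previously established: `[ξᵢ, X_f] = X_{ξᵢ·f}`
    (hcomm : ∀ i f, bracket (ξ i) (Xf f) = Xf (act (ξ i) f)) :
    -- THE CONCLUSION: the bracket `{f,g} = X_f·g - (ξ̄·f)g` satisfies the Leibniz-type identity
    -- `ξᵢ·{f,g} = {ξᵢ·f, g} + {f, ξᵢ·g}`
    ∀ i f g,
      act (ξ i) (act (Xf f) g - act (∑ j, ξ j) f * g)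
        = (act (Xf (act (ξ i) f)) g - act (∑ j, ξ j) (act (ξ i) f) * g)
          + (act (Xf f) (act (ξ i) g) - act (∑ j, ξ j) f * act (ξ i) g) := by
  intro i f g
  have hk' : ((k : ℝ)) ≠ 0 := Nat.cast_ne_zero.mpr hk
  have hact0 : ∀ X, act X (0 : C) = 0 := by
    intro X
    have h := hact_add X 0 0
    rw [add_zero] at h
    linear_combination -h
  have hact1 : ∀ X, act X (1 : C) = 0 := by
    intro X
    have h := hact_mul X 1 1
    rw [mul_one, one_mul, mul_one] at h
    linear_combination -h
  have hact_sub : ∀ X (a b : C), act X (a - b) = act X a - act X b := by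
    intro X a b
    have h := hact_add X (a - b) b
    rw [sub_add_cancel] at h
    linear_combination -h
  have sum1 : (∑ j, η j (Xf (1 : C))) = (k : C) := by
    simp [hXη]
  have ck : algebraMap ℝ C (1 / (k : ℝ)) * (k : C) = 1 := by
    have : ((k : C)) = algebraMap ℝ C (k : ℝ) := by simp
    rw [this, ← map_mul, one_div, inv_mul_cancel₀ hk', map_one]
  have hXΦ1 : ∀ h : C, Φ (Xf h) (Xf 1) = act (Xf 1) h - act (∑ j, ξ j) h := by
    intro h
    rw [hXΦ, sum1, ck, mul_one]
  have hXΦ0 : ∀ h : C, Φ (Xf h) (Xf 0) = act (Xf 0) h := by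
    intro h
    rw [hXΦ]
    simp [hXη]
  have key : ∀ h : C, act (ξ i) (act (∑ j, ξ j) h) = act (∑ j, ξ j) (act (ξ i) h) := by
    intro h
    have e1 : act (∑ j, ξ j) h = act (Xf 1) h - Φ (Xf h) (Xf 1) := by
      rw [hXΦ1]; ring
    have e2 : act (ξ i) (act (Xf 1) h) = act (Xf 0) h + act (Xf 1) (act (ξ i) h) := by
      have hb := hact_bracket (ξ i) (Xf 1) h
      rw [hcomm, hact1] at hb
      linear_combination -hb
    have e3 : act (ξ i) (Φ (Xf h) (Xf 1))
        = Φ (Xf (act (ξ i) h)) (Xf 1) + Φ (Xf h) (Xf 0) := by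
      rw [hLΦ, hcomm, hcomm, hact1]
    rw [e1, hact_sub, e2, e3, hXΦ1, hXΦ0]
    ring
  have m1 : act (ξ i) (act (Xf f) g)
      = act (Xf (act (ξ i) f)) g + act (Xf f) (act (ξ i) g) := by
    have hb := hact_bracket (ξ i) (Xf f) g
    rw [hcomm] at hb
    linear_combination -hb
  rw [hact_sub, m1, hact_mul, key]
  ring
end
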